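/- In the affine root-system setting below, let θ : U → U be an affine bijection permuting the set ℋ of hyperplanes (θ maps ℋ bijectively onto ℋ), let F be a facette with θ(F) = F, let λ ∈ U satisfy α(λ) ∈ ℤ for every α ∈ R, and let 𝒞 be an alcove whose closure contains F. Then t_λ(θ(𝒞)) is an alcove, and the number of hyperplanes H ∈ ℋ separating 𝒞 from t_λ(θ(𝒞)) equals Σ_α |α(λ)| + Σ_{α ∈ R_{F,θ}} |α(λ) − 1|, where the second sum runs over the set R_{F,θ} and the first sum runs over a set of representatives containing exactly one root from each unordered pair {α, −α} ⊆ R such that neither α nor −α belongs to R_{F,θ} (the value |α(λ)| does not depend on the choice of representative). -/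

import Mathlib

open Set

/-- The affine hyperplane `H_{α,k} = {x | α x = k}`. -/
def rootHyperplane {U : Type*} [AddCommGroup U] [Module ℝ U]
    (α : U →ₗ[ℝ] ℝ) (k : ℤ) : Set U :=
  {x | α x = (k : ℝ)}

/-- The collection `ℋ` of all affine root hyperplanes of a root system `R`. -/
def rootHyperplanes {U : Type*} [AddCommGroup U] [Module ℝ U]
    (R : Set (U →ₗ[ℝ] ℝ)) : Set (Set U) :=
  {H | ∃ α ∈ R, ∃ k : ℤ, H = rootHyperplane α k}

/-- `C` is an alcove: a connected component of the complement of the union of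
the hyperplanes. -/
def IsAlcove {U : Type*} [AddCommGroup U] [Module ℝ U] [TopologicalSpace U]
    (R : Set (U →ₗ[ℝ] ℝ)) (C : Set U) : Prop :=
  ∃ x ∈ (⋃₀ rootHyperplanes R)ᶜ, C = connectedComponentIn (⋃₀ rootHyperplanes R)ᶜ x

/-- `F` is a facette: an equivalence class of the relation « for every `α ∈ R` and
`k ∈ ℤ`, the numbers `α x - k` and `α y - k` are both zero, both positive or both
negative ». -/
def IsFacette {U : Type*} [AddCommGroup U] [Module ℝ U]
    (R : Set (U →ₗ[ℝ] ℝ)) (F : Set U) : Prop :=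
  ∃ x : U, F = {y | ∀ α ∈ R, ∀ k : ℤ,
    (α x = (k : ℝ) ↔ α y = (k : ℝ)) ∧ ((k : ℝ) < α x ↔ (k : ℝ) < α y)}

/-- The hyperplane `H` separates `C` from `C'`: it is of the form `H_{α,k}` with
`α - k` positive on one of them and negative on the other. -/
def SeparatesIn {U : Type*} [AddCommGroup U] [Module ℝ U]
    (R : Set (U →ₗ[ℝ] ℝ)) (H C C' : Set U) : Prop :=
  ∃ α ∈ R, ∃ k : ℤ, H = rootHyperplane α k ∧
    (((∀ x ∈ C, (k : ℝ) < α x) ∧ (∀ x ∈ C', α x < (k : ℝ))) ∨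
     ((∀ x ∈ C, α x < (k : ℝ)) ∧ (∀ x ∈ C', (k : ℝ) < α x)))

set_option linter.unusedSectionVars false

section Aux

variable {U : Type*} [NormedAddCommGroup U] [NormedSpace ℝ U] [FiniteDimensional ℝ U]

/-- negating both root and level gives the same hyperplane -/
lemma neg_rootHyperplane (α : U →ₗ[ℝ] ℝ) (k : ℤ) :
    rootHyperplane (-α) (-k) = rootHyperplane α k := by
  ext x
  simp only [rootHyperplane, mem_setOf_eq, LinearMap.neg_apply, Int.cast_neg, neg_inj]

lemma exists_mem_rootHyperplane {α : U →ₗ[ℝ] ℝ} (hα : α ≠ 0) (k : ℤ) :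
    ∃ x, x ∈ rootHyperplane α k := by
  obtain ⟨u, hu⟩ : ∃ u, α u ≠ 0 := by
    by_contra h
    push_neg at h
    exact hα (LinearMap.ext fun u => h u)
  exact ⟨((k : ℝ) / α u) • u, by simp [rootHyperplane, div_mul_cancel₀ _ hu]⟩

lemma rootHyperplane_injective {α : U →ₗ[ℝ] ℝ} (hα : α ≠ 0) {k l : ℤ}
    (h : rootHyperplane α k = rootHyperplane α l) : k = l := by
  obtain ⟨x, hx⟩ := exists_mem_rootHyperplane hα k
  have hx' : x ∈ rootHyperplane α l := h ▸ hx
  have : (k : ℝ) = l := by rw [← hx, ← hx']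
  exact_mod_cast this

lemma rootHyperplane_eq_cases {α β : U →ₗ[ℝ] ℝ} (hα : α ≠ 0) (hβ : β ≠ 0)
    (hred : ∀ c : ℝ, β = c • α → β = α ∨ β = -α) {k l : ℤ}
    (h : rootHyperplane α k = rootHyperplane β l) :
    (β = α ∧ l = k) ∨ (β = -α ∧ l = -k) := by
  obtain ⟨u, hu⟩ : ∃ u, α u ≠ 0 := by
    by_contra hcon
    push_neg at hcon
    exact hα (LinearMap.ext fun u => hcon u)
  obtain ⟨x₀, hx₀⟩ := exists_mem_rootHyperplane hα k
  have hx₀'' : x₀ ∈ rootHyperplane β l := h ▸ hx₀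
  have hx₀' : β x₀ = (l : ℝ) := hx₀''
  have hx₀k : α x₀ = (k : ℝ) := hx₀
  have hker : ∀ v, α v = 0 → β v = 0 := by
    intro v hv
    have h1 : x₀ + v ∈ rootHyperplane α k := by
      simp only [rootHyperplane, mem_setOf_eq, map_add, hv, hx₀k, add_zero]
    have h1' : x₀ + v ∈ rootHyperplane β l := h ▸ h1
    have h2 : β (x₀ + v) = (l : ℝ) := h1'
    rw [map_add, hx₀'] at h2
    linarith
  have hsm : β = (β u / α u) • α := by
    ext x
    have hv : α (x - (α x / α u) • u) = 0 := by
      simp only [map_sub, map_smul, smul_eq_mul, div_mul_cancel₀ _ hu, sub_self]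
    have := hker _ hv
    rw [map_sub, map_smul, smul_eq_mul] at this
    simp only [LinearMap.smul_apply, smul_eq_mul]
    field_simp at this ⊢
    linarith
  rcases hred _ hsm with h1 | h1
  · left
    refine ⟨h1, ?_⟩
    subst h1
    exact (rootHyperplane_injective hα h.symm).symm ▸ rfl
  · right
    refine ⟨h1, ?_⟩
    subst h1
    have h2 : rootHyperplane (-α) l = rootHyperplane α (-l) := by
      rw [← neg_rootHyperplane α (-l), neg_neg]
    have := rootHyperplane_injective hα (h.trans h2)
    omega

/-- image of an alcove under an affine equivalence permuting the hyperplanes -/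
lemma isAlcove_image {R : Set (U →ₗ[ℝ] ℝ)} (e : U ≃ᵃ[ℝ] U)
    (he : (fun H : Set U => (e : U → U) '' H) '' rootHyperplanes R = rootHyperplanes R)
    {C : Set U} (hC : IsAlcove R C) : IsAlcove R ((e : U → U) '' C) := by
  obtain ⟨x, hx, rfl⟩ := hC
  have hU : (e : U → U) '' ⋃₀ rootHyperplanes R = ⋃₀ rootHyperplanes R := by
    rw [Set.image_sUnion, he]
  have hW : (e : U → U) '' (⋃₀ rootHyperplanes R)ᶜ = (⋃₀ rootHyperplanes R)ᶜ := by
    rw [Set.image_compl_eq e.bijective, hU]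
  have hex : e x ∈ (⋃₀ rootHyperplanes R)ᶜ := by
    rw [← hW]; exact mem_image_of_mem _ hx
  refine ⟨e x, hex, ?_⟩
  have h1 := e.toHomeomorphOfFiniteDimensional.image_connectedComponentIn
    (s := (⋃₀ rootHyperplanes R)ᶜ) (x := x) hx
  simp only [AffineEquiv.coe_toHomeomorphOfFiniteDimensional] at h1
  rw [h1, hW]

/-- translation by lam maps `H_{α,k}` to `H_{α,k+m}` where `m = α lam`. -/
lemma translate_rootHyperplane (lam : U) (α : U →ₗ[ℝ] ℝ) (k m : ℤ) (hm : α lam = (m : ℝ)) :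
    (fun x => lam + x) '' rootHyperplane α k = rootHyperplane α (k + m) := by
  ext y
  constructor
  · rintro ⟨x, hx, rfl⟩
    simp only [rootHyperplane, mem_setOf_eq] at hx ⊢
    rw [map_add, hx, hm]
    push_cast
    ring
  · intro hy
    simp only [rootHyperplane, mem_setOf_eq] at hy
    refine ⟨-lam + y, ?_, by simp⟩
    simp only [rootHyperplane, mem_setOf_eq, map_add, map_neg, hy, hm]
    push_cast
    ring

lemma translate_rootHyperplanes {R : Finset (U →ₗ[ℝ] ℝ)} (lam : U)
    (hlam : ∀ α ∈ R, ∃ m : ℤ, α lam = (m : ℝ)) :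
    (fun H : Set U => (fun x => lam + x) '' H) '' rootHyperplanes (R : Set (U →ₗ[ℝ] ℝ))
      = rootHyperplanes (R : Set (U →ₗ[ℝ] ℝ)) := by
  apply Set.eq_of_subset_of_subset
  · rintro H ⟨H', ⟨α, hα, k, rfl⟩, rfl⟩
    obtain ⟨m, hm⟩ := hlam α hα
    refine ⟨α, hα, k + m, ?_⟩
    show _ = rootHyperplane α (k + m)
    exact translate_rootHyperplane lam α k m hm
  · rintro H ⟨α, hα, k, rfl⟩
    obtain ⟨m, hm⟩ := hlam α hα
    refine ⟨rootHyperplane α (k - m), ⟨α, hα, k - m, rfl⟩, ?_⟩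
    show (fun x => lam + x) '' _ = _
    rw [translate_rootHyperplane lam α (k - m) m hm, sub_add_cancel]

/-- closure bound from above -/
lemma le_of_closure_forall_le {s : Set U} {α : U →ₗ[ℝ] ℝ} {c : ℝ}
    (h : ∀ y ∈ s, α y ≤ c) {x : U} (hx : x ∈ closure s) : α x ≤ c := by
  have hcl : closure s ⊆ {y | α y ≤ c} :=
    closure_minimal h (isClosed_le α.continuous_of_finiteDimensional continuous_const)
  exact hcl hx

lemma ge_of_closure_forall_ge {s : Set U} {α : U →ₗ[ℝ] ℝ} {c : ℝ}
    (h : ∀ y ∈ s, c ≤ α y) {x : U} (hx : x ∈ closure s) : c ≤ α x := by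
  have hcl : closure s ⊆ {y | c ≤ α y} :=
    closure_minimal h (isClosed_le continuous_const α.continuous_of_finiteDimensional)
  exact hcl hx

/-- an alcove is, for each root, contained in an open slab between consecutive integers -/
lemma alcove_interval {R : Set (U →ₗ[ℝ] ℝ)} {C : Set U} (hC : IsAlcove R C)
    {α : U →ₗ[ℝ] ℝ} (hα : α ∈ R) :
    ∃ n : ℤ, ∀ y ∈ C, (n : ℝ) < α y ∧ α y < n + 1 := by
  obtain ⟨x, hx, rfl⟩ := hC
  set W := (⋃₀ rootHyperplanes R)ᶜ with hWdef
  have hsub : connectedComponentIn W x ⊆ W := connectedComponentIn_subset W x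
  have hnoint : ∀ y ∈ connectedComponentIn W x, ∀ k : ℤ, α y ≠ (k : ℝ) := by
    intro y hy k hk
    exact (hsub hy) ⟨rootHyperplane α k, ⟨α, hα, k, rfl⟩, hk⟩
  have hxC : x ∈ connectedComponentIn W x := mem_connectedComponentIn hx
  have hpc : IsPreconnected (α '' connectedComponentIn W x) :=
    isPreconnected_connectedComponentIn.image _
      α.continuous_of_finiteDimensional.continuousOn
  have hoc := hpc.ordConnected
  refine ⟨⌊α x⌋, fun y hy => ?_⟩
  have hxf1 : (⌊α x⌋ : ℝ) < α x :=
    lt_of_le_of_ne (Int.floor_le _) fun h => hnoint x hxC _ h.symm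
  have hxf2 : α x < ⌊α x⌋ + 1 := Int.lt_floor_add_one _
  constructor
  · by_contra hcon
    push_neg at hcon
    have hmem : (⌊α x⌋ : ℝ) ∈ α '' connectedComponentIn W x :=
      hoc.out (mem_image_of_mem _ hy) (mem_image_of_mem _ hxC) ⟨hcon, le_of_lt hxf1⟩
    obtain ⟨z, hz, hz'⟩ := hmem
    exact hnoint z hz _ hz'
  · by_contra hcon
    push_neg at hcon
    have hmem : ((⌊α x⌋ + 1 : ℤ) : ℝ) ∈ α '' connectedComponentIn W x := by
      refine hoc.out (mem_image_of_mem _ hxC) (mem_image_of_mem _ hy) ?_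
      push_cast
      exact ⟨le_of_lt hxf2, hcon⟩
    obtain ⟨z, hz, hz'⟩ := hmem
    exact hnoint z hz _ hz'

lemma alcove_nonempty {R : Set (U →ₗ[ℝ] ℝ)} {C : Set U} (hC : IsAlcove R C) :
    C.Nonempty := by
  obtain ⟨x, hx, rfl⟩ := hC
  exact ⟨x, mem_connectedComponentIn hx⟩

/-- uniqueness of the slab index -/
lemma slab_unique {C : Set U} (hne : C.Nonempty) {α : U →ₗ[ℝ] ℝ} {n n' : ℤ}
    (h : ∀ y ∈ C, (n : ℝ) < α y ∧ α y < n + 1)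
    (h' : ∀ y ∈ C, (n' : ℝ) < α y ∧ α y < n' + 1) : n = n' := by
  obtain ⟨y, hy⟩ := hne
  obtain ⟨h1, h2⟩ := h y hy
  obtain ⟨h3, h4⟩ := h' y hy
  have : (n : ℝ) < n' + 1 := lt_trans h1 h4
  have : (n' : ℝ) < n + 1 := lt_trans h3 h2
  have e1 : (n : ℤ) < n' + 1 := by exact_mod_cast ‹(n : ℝ) < n' + 1›
  have e2 : (n' : ℤ) < n + 1 := by exact_mod_cast ‹(n' : ℝ) < n + 1›
  omega

end Aux

lemma toNat_max_sub_min_cast (a b : ℤ) :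
    (((max a b - min a b).toNat : ℕ) : ℝ) = |(a : ℝ) - (b : ℝ)| := by
  have h1 : ((|b - a|).toNat : ℤ) = |b - a| := Int.toNat_of_nonneg (abs_nonneg _)
  rw [max_sub_min_eq_abs]
  calc ((|b - a|.toNat : ℕ) : ℝ) = ((((|b - a|.toNat : ℕ) : ℤ)) : ℝ) := by push_cast; ring
    _ = ((|b - a| : ℤ) : ℝ) := by rw [h1]
    _ = |(b : ℝ) - (a : ℝ)| := by push_cast; ring
    _ = |(a : ℝ) - (b : ℝ)| := abs_sub_comm _ _

/-- The generalized Iwahori–Matsumoto length formula (Proposition 4.3 of the paper):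
the number of hyperplanes separating the alcove `𝒞` from `t_λ(θ(𝒞))`. -/
theorem card_separating_hyperplanes_translation_theta
    {U : Type*} [NormedAddCommGroup U] [NormedSpace ℝ U] [FiniteDimensional ℝ U]
    (R : Finset (U →ₗ[ℝ] ℝ))
    (hR0 : (0 : U →ₗ[ℝ] ℝ) ∉ R)
    (hRneg : ∀ α ∈ R, -α ∈ R)
    (hcoroot : ∀ α ∈ R, ∃ αv : U, α αv = 2 ∧
      ∀ β ∈ R, (β - (β αv) • α) ∈ R ∧ ∃ m : ℤ, β αv = (m : ℝ))
    (hreduced : ∀ α ∈ R, ∀ β ∈ R, ∀ c : ℝ, β = c • α → β = α ∨ β = -α)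
    (θ : U ≃ᵃ[ℝ] U)
    (hθH : (fun H : Set U => (θ : U → U) '' H) '' rootHyperplanes (R : Set (U →ₗ[ℝ] ℝ))
      = rootHyperplanes (R : Set (U →ₗ[ℝ] ℝ)))
    (F : Set U) (hF : IsFacette (R : Set (U →ₗ[ℝ] ℝ)) F) (hθF : (θ : U → U) '' F = F)
    (lam : U) (hlam : ∀ α ∈ R, ∃ m : ℤ, α lam = (m : ℝ))
    (C : Set U) (hC : IsAlcove (R : Set (U →ₗ[ℝ] ℝ)) C) (hFC : F ⊆ closure C)
    -- the set R_{F,θ} of roots α ∈ R_F with α - k_α > 0 on 𝒞 and α∘θ - k_α < 0 on 𝒞 :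
    (RFθ : Set (U →ₗ[ℝ] ℝ))
    (hRFθ : RFθ = {α : U →ₗ[ℝ] ℝ | α ∈ R ∧ ∃ k : ℤ, (∀ x ∈ F, α x = (k : ℝ)) ∧
      (∀ x ∈ C, (k : ℝ) < α x) ∧ (∀ x ∈ C, α (θ x) < (k : ℝ))})
    (B : Finset (U →ₗ[ℝ] ℝ)) (hB : (B : Set (U →ₗ[ℝ] ℝ)) = RFθ)
    -- A is a set of representatives of the pairs {α, -α} avoiding R_{F,θ} :
    (A : Finset (U →ₗ[ℝ] ℝ)) (hAR : (A : Set (U →ₗ[ℝ] ℝ)) ⊆ (R : Set (U →ₗ[ℝ] ℝ)))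
    (hAavoid : ∀ α ∈ A, α ∉ RFθ ∧ -α ∉ RFθ)
    (hArep : ∀ α ∈ R, α ∉ RFθ → -α ∉ RFθ →
      ((α ∈ A ∨ -α ∈ A) ∧ ¬(α ∈ A ∧ -α ∈ A))) :
    IsAlcove (R : Set (U →ₗ[ℝ] ℝ)) ((fun x => lam + x) '' ((θ : U → U) '' C)) ∧
    ({H : Set U | H ∈ rootHyperplanes (R : Set (U →ₗ[ℝ] ℝ)) ∧
        SeparatesIn (R : Set (U →ₗ[ℝ] ℝ)) H C
          ((fun x => lam + x) '' ((θ : U → U) '' C))}.ncard : ℝ)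
      = (∑ α ∈ A, |α lam|) + ∑ α ∈ B, |α lam - 1| := by
  classical
  have hRne : ∀ α : U →ₗ[ℝ] ℝ, α ∈ R → α ≠ 0 := fun α hα h0 => hR0 (h0 ▸ hα)
  -- facette basepoint
  obtain ⟨x₀, hFdef⟩ := hF
  have hx₀F : x₀ ∈ F := by rw [hFdef]; exact fun α hα k => ⟨Iff.rfl, Iff.rfl⟩
  -- the alcoves D = θ(C) and E = lam + D
  set D := (θ : U → U) '' C with hDdef
  have hD : IsAlcove (R : Set (U →ₗ[ℝ] ℝ)) D := isAlcove_image θ hθH hC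
  set E := (fun x => lam + x) '' D with hEdef
  have hcoe : ((AffineEquiv.constVAdd ℝ U lam : U ≃ᵃ[ℝ] U) : U → U) = fun x => lam + x := by
    ext x
    simp [AffineEquiv.constVAdd]
    rfl
  have hEalc : IsAlcove (R : Set (U →ₗ[ℝ] ℝ)) E := by
    have h1 := isAlcove_image (AffineEquiv.constVAdd ℝ U lam)
      (by rw [hcoe]; exact translate_rootHyperplanes lam hlam) hD
    rw [hcoe] at h1
    exact h1
  refine ⟨hEalc, ?_⟩
  -- F is contained in the closure of D
  have hFD : F ⊆ closure D := by
    intro y hy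
    have hy' : y ∈ (θ : U → U) '' F := hθF.symm ▸ hy
    obtain ⟨z, hz, rfl⟩ := hy'
    have himgcl : (θ : U → U) '' closure C = closure D := by
      have := θ.toHomeomorphOfFiniteDimensional.image_closure C
      simpa using this
    exact himgcl ▸ Set.mem_image_of_mem _ (hFC hz)
  -- choose slab indices
  choose! nC hnC using fun α (hα : α ∈ R) => alcove_interval hC (Finset.mem_coe.2 hα)
  choose! nD hnD using fun α (hα : α ∈ R) => alcove_interval hD (Finset.mem_coe.2 hα)
  choose! m hm using hlam
  have hCne := alcove_nonempty hC
  have hDne := alcove_nonempty hD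
  have hEne : E.Nonempty := hDne.image _
  have hnE : ∀ α ∈ R, ∀ y ∈ E, ((nD α + m α : ℤ) : ℝ) < α y ∧ α y < ((nD α + m α : ℤ) : ℝ) + 1 := by
    intro α hα y hy
    obtain ⟨z, hz, rfl⟩ := hy
    obtain ⟨h1, h2⟩ := hnD α hα z hz
    rw [map_add, hm α hα]
    push_cast
    constructor <;> linarith
  -- RFθ basics
  have hBmem : ∀ α : U →ₗ[ℝ] ℝ, α ∈ B ↔ α ∈ RFθ := by
    intro α
    rw [← hB]
    exact Iff.rfl
  have hRFθR : ∀ α ∈ RFθ, α ∈ R := by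
    rw [hRFθ]; exact fun α h => h.1
  have hnegRFθ : ∀ α : U →ₗ[ℝ] ℝ, α ∈ RFθ → -α ∈ RFθ → False := by
    rw [hRFθ]
    rintro α ⟨hα, k, hFk, hCk, -⟩ ⟨hα', k', hFk', hCk', -⟩
    obtain ⟨xc, hxc⟩ := hCne
    have h1 := hFk x₀ hx₀F
    have h2 := hFk' x₀ hx₀F
    have h3 := hCk xc hxc
    have h4 := hCk' xc hxc
    simp only [LinearMap.neg_apply] at h2 h4
    linarith
  have hABR : ∀ α ∈ A ∪ B, α ∈ R := by
    intro α hα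
    rcases Finset.mem_union.1 hα with h | h
    · exact Finset.mem_coe.1 (hAR (Finset.mem_coe.2 h))
    · exact hRFθR α ((hBmem α).1 h)
  have hpair : ∀ γ : U →ₗ[ℝ] ℝ, γ ∈ A ∪ B → -γ ∈ A ∪ B → False := by
    intro γ h1 h2
    rcases Finset.mem_union.1 h1 with hA1 | hB1 <;> rcases Finset.mem_union.1 h2 with hA2 | hB2
    · exact (hArep γ (Finset.mem_coe.1 (hAR (Finset.mem_coe.2 hA1)))
        (hAavoid γ hA1).1 (hAavoid γ hA1).2).2 ⟨hA1, hA2⟩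
    · exact (hAavoid γ hA1).2 ((hBmem _).1 hB2)
    · exact (hAavoid (-γ) hA2).2 (by rw [neg_neg]; exact (hBmem _).1 hB1)
    · exact hnegRFθ γ ((hBmem _).1 hB1) ((hBmem _).1 hB2)
  -- closure bounds
  have hclosC : ∀ α ∈ R, ∀ k : ℤ, (∀ x ∈ F, α x = (k : ℝ)) → (nC α ≤ k ∧ k ≤ nC α + 1) := by
    intro α hα k hk
    have h1 : α x₀ ≤ (nC α : ℝ) + 1 :=
      le_of_closure_forall_le (fun y hy => le_of_lt (hnC α hα y hy).2) (hFC hx₀F)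
    have h2 : (nC α : ℝ) ≤ α x₀ :=
      ge_of_closure_forall_ge (fun y hy => le_of_lt (hnC α hα y hy).1) (hFC hx₀F)
    rw [hk x₀ hx₀F] at h1 h2
    constructor
    · exact_mod_cast h2
    · have : (k : ℝ) ≤ ((nC α + 1 : ℤ) : ℝ) := by push_cast; linarith
      exact_mod_cast this
  have hclosD : ∀ α ∈ R, ∀ k : ℤ, (∀ x ∈ F, α x = (k : ℝ)) → (nD α ≤ k ∧ k ≤ nD α + 1) := by
    intro α hα k hk
    have h1 : α x₀ ≤ (nD α : ℝ) + 1 :=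
      le_of_closure_forall_le (fun y hy => le_of_lt (hnD α hα y hy).2) (hFD hx₀F)
    have h2 : (nD α : ℝ) ≤ α x₀ :=
      ge_of_closure_forall_ge (fun y hy => le_of_lt (hnD α hα y hy).1) (hFD hx₀F)
    rw [hk x₀ hx₀F] at h1 h2
    constructor
    · exact_mod_cast h2
    · have : (k : ℝ) ≤ ((nD α + 1 : ℤ) : ℝ) := by push_cast; linarith
      exact_mod_cast this
  -- claim 1 : for α ∈ RFθ, nC α = nD α + 1
  have claim1 : ∀ α ∈ RFθ, nC α = nD α + 1 := by
    intro α hαθ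
    have hdata := hRFθ ▸ hαθ
    obtain ⟨hαR, k, hFk, hCk, hθk⟩ := hdata
    obtain ⟨hb1, hb2⟩ := hclosC α hαR k hFk
    obtain ⟨hb3, hb4⟩ := hclosD α hαR k hFk
    obtain ⟨xc, hxc⟩ := hCne
    have h1 : (k : ℝ) < α xc := hCk xc hxc
    have h2 : α xc < (nC α : ℝ) + 1 := (hnC α hαR xc hxc).2
    have h5 : (k : ℝ) < ((nC α + 1 : ℤ) : ℝ) := by push_cast; linarith
    have h5' : k < nC α + 1 := by exact_mod_cast h5
    have h3 : α ((θ : U → U) xc) < (k : ℝ) := hθk xc hxc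
    have h4 : (nD α : ℝ) < α ((θ : U → U) xc) :=
      (hnD α hαR _ (Set.mem_image_of_mem _ hxc)).1
    have h6 : (nD α : ℝ) < (k : ℝ) := by linarith
    have h6' : nD α < k := by exact_mod_cast h6
    omega
  -- claim 2 : for α ∈ R with ±α ∉ RFθ, nC α = nD α
  have claim2 : ∀ α ∈ R, α ∉ RFθ → -α ∉ RFθ → nC α = nD α := by
    intro α hαR hα1 hα2
    by_cases hRF : ∃ k : ℤ, ∀ x ∈ F, α x = (k : ℝ)
    · obtain ⟨k, hk⟩ := hRF
      obtain ⟨hb1, hb2⟩ := hclosC α hαR k hk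
      obtain ⟨hb3, hb4⟩ := hclosD α hαR k hk
      have hne1 : ¬(nC α = k ∧ nD α = k - 1) := by
        rintro ⟨e1, e2⟩
        apply hα1
        rw [hRFθ]
        refine ⟨hαR, k, hk, ?_, ?_⟩
        · intro x hx
          have := (hnC α hαR x hx).1
          rw [e1] at this
          exact this
        · intro x hx
          have := (hnD α hαR _ (Set.mem_image_of_mem (θ : U → U) hx)).2
          rw [e2] at this
          push_cast at this
          linarith
      have hne2 : ¬(nC α = k - 1 ∧ nD α = k) := by
        rintro ⟨e1, e2⟩
        apply hα2
        rw [hRFθ]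
        refine ⟨hRneg α hαR, -k, ?_, ?_, ?_⟩
        · intro x hx
          simp only [LinearMap.neg_apply, hk x hx]
          push_cast
          ring
        · intro x hx
          have := (hnC α hαR x hx).2
          rw [e1] at this
          simp only [LinearMap.neg_apply]
          push_cast at this ⊢
          linarith
        · intro x hx
          have := (hnD α hαR _ (Set.mem_image_of_mem (θ : U → U) hx)).1
          rw [e2] at this
          simp only [LinearMap.neg_apply]
          push_cast
          linarith
      omega
    · push_neg at hRF
      have hnotint : ∀ k : ℤ, α x₀ ≠ (k : ℝ) := by
        intro k hk
        obtain ⟨x, hxF, hxne⟩ := hRF k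
        have hxF' : x ∈ {y : U | ∀ β ∈ (R : Set (U →ₗ[ℝ] ℝ)), ∀ k' : ℤ,
            (β x₀ = (k' : ℝ) ↔ β y = (k' : ℝ)) ∧ ((k' : ℝ) < β x₀ ↔ (k' : ℝ) < β y)} :=
          hFdef ▸ hxF
        exact hxne (((hxF' α (Finset.mem_coe.2 hαR) k).1).1 hk)
      have hq1 : (⌊α x₀⌋ : ℝ) < α x₀ :=
        lt_of_le_of_ne (Int.floor_le _) fun h => hnotint ⌊α x₀⌋ h.symm
      have h1 : (nC α : ℝ) ≤ α x₀ :=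
        ge_of_closure_forall_ge (fun y hy => le_of_lt (hnC α hαR y hy).1) (hFC hx₀F)
      have h2 : α x₀ ≤ (nC α : ℝ) + 1 :=
        le_of_closure_forall_le (fun y hy => le_of_lt (hnC α hαR y hy).2) (hFC hx₀F)
      have h2' : α x₀ < (nC α : ℝ) + 1 := by
        rcases lt_or_eq_of_le h2 with h | h
        · exact h
        · exact absurd (by push_cast; exact h : α x₀ = ((nC α + 1 : ℤ) : ℝ))
            (hnotint (nC α + 1))
      have h3 : (nD α : ℝ) ≤ α x₀ :=
        ge_of_closure_forall_ge (fun y hy => le_of_lt (hnD α hαR y hy).1) (hFD hx₀F)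
      have h4 : α x₀ ≤ (nD α : ℝ) + 1 :=
        le_of_closure_forall_le (fun y hy => le_of_lt (hnD α hαR y hy).2) (hFD hx₀F)
      have h4' : α x₀ < (nD α : ℝ) + 1 := by
        rcases lt_or_eq_of_le h4 with h | h
        · exact h
        · exact absurd (by push_cast; exact h : α x₀ = ((nD α + 1 : ℤ) : ℝ))
            (hnotint (nD α + 1))
      have e1 : ⌊α x₀⌋ = nC α := Int.floor_eq_iff.2 ⟨h1, h2'⟩
      have e2 : ⌊α x₀⌋ = nD α := Int.floor_eq_iff.2 ⟨h3, h4'⟩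
      omega
  -- characterization of separating levels
  have sep_iff : ∀ α ∈ R, ∀ k : ℤ,
      ((((∀ x ∈ C, (k : ℝ) < α x) ∧ (∀ x ∈ E, α x < (k : ℝ))) ∨
        ((∀ x ∈ C, α x < (k : ℝ)) ∧ (∀ x ∈ E, (k : ℝ) < α x)))
        ↔ (min (nC α) (nD α + m α) < k ∧ k ≤ max (nC α) (nD α + m α))) := by
    intro α hα k
    obtain ⟨xc, hxc⟩ := hCne
    obtain ⟨xe, hxe⟩ := hEne
    constructor
    · rintro (⟨h1, h2⟩ | ⟨h1, h2⟩)
      · have e1 : (k : ℝ) < ((nC α + 1 : ℤ) : ℝ) := by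
          have := (hnC α hα xc hxc).2
          have := h1 xc hxc
          push_cast
          linarith
        have e1' : k < nC α + 1 := by exact_mod_cast e1
        have e2 : ((nD α + m α : ℤ) : ℝ) < (k : ℝ) := by
          have q1 := (hnE α hα xe hxe).1
          have q2 := h2 xe hxe
          push_cast at q1 ⊢
          linarith
        have e2' : nD α + m α < k := by exact_mod_cast e2
        omega
      · have e1 : ((nC α : ℤ) : ℝ) < (k : ℝ) := by
          have := (hnC α hα xc hxc).1
          have := h1 xc hxc
          linarith
        have e1' : nC α < k := by exact_mod_cast e1
        have e2 : (k : ℝ) < ((nD α + m α + 1 : ℤ) : ℝ) := by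
          have q1 := (hnE α hα xe hxe).2
          have q2 := h2 xe hxe
          push_cast at q1 ⊢
          linarith
        have e2' : k < nD α + m α + 1 := by exact_mod_cast e2
        omega
    · rintro ⟨hmin, hmax⟩
      by_cases hcase : k ≤ nC α
      · have hp : nD α + m α < k := by omega
        left
        constructor
        · intro x hx
          have h1 := (hnC α hα x hx).1
          have h2 : (k : ℝ) ≤ (nC α : ℝ) := by exact_mod_cast hcase
          linarith
        · intro x hx
          have h1 := (hnE α hα x hx).2
          have h2 : ((nD α + m α + 1 : ℤ) : ℝ) ≤ (k : ℝ) := by exact_mod_cast (by omega : nD α + m α + 1 ≤ k)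
          push_cast at h1 h2
          linarith
      · have hn : nC α < k := by omega
        have hkp : k ≤ nD α + m α := by omega
        right
        constructor
        · intro x hx
          have h1 := (hnC α hα x hx).2
          have h2 : ((nC α + 1 : ℤ) : ℝ) ≤ (k : ℝ) := by exact_mod_cast (by omega : nC α + 1 ≤ k)
          push_cast at h2
          linarith
        · intro x hx
          have h1 := (hnE α hα x hx).1
          have h2 : (k : ℝ) ≤ ((nD α + m α : ℤ) : ℝ) := by exact_mod_cast hkp
          push_cast at h1 h2
          linarith
  -- the finset of separating hyperplanes
  set f : (U →ₗ[ℝ] ℝ) → Finset (Set U) := fun α =>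
    (Finset.Ioc (min (nC α) (nD α + m α)) (max (nC α) (nD α + m α))).image
      (fun k => rootHyperplane α k) with hfdef
  set T : Finset (Set U) := (A ∪ B).biUnion f with hTdef
  have hST : {H : Set U | H ∈ rootHyperplanes (R : Set (U →ₗ[ℝ] ℝ)) ∧
      SeparatesIn (R : Set (U →ₗ[ℝ] ℝ)) H C E} = ↑T := by
    ext H
    simp only [Set.mem_setOf_eq, Finset.mem_coe]
    constructor
    · rintro ⟨hHmem, β, hβR, l, rfl, hsep⟩
      have hβR' : β ∈ R := Finset.mem_coe.1 hβR
      have hl := (sep_iff β hβR' l).1 hsep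
      by_cases hβAB : β ∈ A ∪ B
      · exact Finset.mem_biUnion.2 ⟨β, hβAB,
          Finset.mem_image.2 ⟨l, Finset.mem_Ioc.2 ⟨hl.1, hl.2⟩, rfl⟩⟩
      · -- then -β ∈ A ∪ B
        have hnegAB : -β ∈ A ∪ B := by
          by_cases hβθ : β ∈ RFθ
          · exact absurd (Finset.mem_union_right _ ((hBmem β).2 hβθ)) hβAB
          · by_cases hβθ' : -β ∈ RFθ
            · exact Finset.mem_union_right _ ((hBmem (-β)).2 hβθ')
            · rcases (hArep β hβR' hβθ hβθ').1 with h | h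
              · exact absurd (Finset.mem_union_left _ h) hβAB
              · exact Finset.mem_union_left _ h
        have hsep' : (((∀ x ∈ C, ((-l : ℤ) : ℝ) < (-β) x) ∧ (∀ x ∈ E, (-β) x < ((-l : ℤ) : ℝ))) ∨
            ((∀ x ∈ C, (-β) x < ((-l : ℤ) : ℝ)) ∧ (∀ x ∈ E, ((-l : ℤ) : ℝ) < (-β) x))) := by
          rcases hsep with ⟨h1, h2⟩ | ⟨h1, h2⟩
          · right
            constructor
            · intro x hx
              have := h1 x hx
              simp only [LinearMap.neg_apply]
              push_cast
              linarith
            · intro x hx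
              have := h2 x hx
              simp only [LinearMap.neg_apply]
              push_cast
              linarith
          · left
            constructor
            · intro x hx
              have := h1 x hx
              simp only [LinearMap.neg_apply]
              push_cast
              linarith
            · intro x hx
              have := h2 x hx
              simp only [LinearMap.neg_apply]
              push_cast
              linarith
        have hl' := (sep_iff (-β) (hRneg β hβR') (-l)).1 hsep'
        exact Finset.mem_biUnion.2 ⟨-β, hnegAB,
          Finset.mem_image.2 ⟨-l, Finset.mem_Ioc.2 ⟨hl'.1, hl'.2⟩, neg_rootHyperplane β l⟩⟩
    · intro hHT
      obtain ⟨γ, hγAB, hHf⟩ := Finset.mem_biUnion.1 hHT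
      obtain ⟨l, hl, rfl⟩ := Finset.mem_image.1 hHf
      have hl' := Finset.mem_Ioc.1 hl
      have hγR := hABR γ hγAB
      refine ⟨⟨γ, Finset.mem_coe.2 hγR, l, rfl⟩, γ, Finset.mem_coe.2 hγR, l, rfl, ?_⟩
      exact (sep_iff γ hγR l).2 ⟨hl'.1, hl'.2⟩
  rw [hST, Set.ncard_coe_finset]
  have hdisj : ∀ α ∈ A ∪ B, ∀ β ∈ A ∪ B, α ≠ β → Disjoint (f α) (f β) := by
    intro α hα β hβ hne
    rw [Finset.disjoint_left]
    intro H hHα hHβ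
    simp only [hfdef, Finset.mem_image] at hHα hHβ
    obtain ⟨k, -, hk⟩ := hHα
    obtain ⟨l, -, hl⟩ := hHβ
    have heq : rootHyperplane α k = rootHyperplane β l := hk.trans hl.symm
    have hαR := hABR α hα
    have hβR := hABR β hβ
    rcases rootHyperplane_eq_cases (hRne α hαR) (hRne β hβR)
        (fun c hc => hreduced α hαR β hβR c hc) heq with ⟨h1, -⟩ | ⟨h1, -⟩
    · exact hne h1.symm
    · exact hpair α hα (h1 ▸ hβ)
  rw [Finset.card_biUnion hdisj]
  have hcard : ∀ α ∈ A ∪ B, ((f α).card : ℝ)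
      = |((nC α : ℝ)) - ((nD α + m α : ℤ) : ℝ)| := by
    intro α hα
    have hinj : Set.InjOn (fun k : ℤ => rootHyperplane α k)
        ↑(Finset.Ioc (min (nC α) (nD α + m α)) (max (nC α) (nD α + m α))) :=
      fun k _ l _ h => rootHyperplane_injective (hRne α (hABR α hα)) h
    rw [hfdef]
    simp only []
    rw [Finset.card_image_of_injOn hinj, Int.card_Ioc]
    exact toNat_max_sub_min_cast _ _
  have hABdisj : Disjoint A B :=
    Finset.disjoint_left.2 fun α hαA hαB => (hAavoid α hαA).1 ((hBmem α).1 hαB)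
  have hcast : ((∑ α ∈ A ∪ B, (f α).card : ℕ) : ℝ) = ∑ α ∈ A ∪ B, ((f α).card : ℝ) := by
    push_cast
    rfl
  rw [hcast, Finset.sum_congr rfl hcard, Finset.sum_union hABdisj]
  have hsumA : ∑ α ∈ A, |((nC α : ℝ)) - ((nD α + m α : ℤ) : ℝ)| = ∑ α ∈ A, |α lam| := by
    refine Finset.sum_congr rfl fun α hαA => ?_
    have hαR : α ∈ R := Finset.mem_coe.1 (hAR (Finset.mem_coe.2 hαA))
    have e := claim2 α hαR (hAavoid α hαA).1 (hAavoid α hαA).2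
    have : (nC α : ℝ) - ((nD α + m α : ℤ) : ℝ) = -(α lam) := by
      rw [hm α hαR, e]
      push_cast
      ring
    rw [this, abs_neg]
  have hsumB : ∑ α ∈ B, |((nC α : ℝ)) - ((nD α + m α : ℤ) : ℝ)| = ∑ α ∈ B, |α lam - 1| := by
    refine Finset.sum_congr rfl fun α hαB => ?_
    have hαθ : α ∈ RFθ := (hBmem α).1 hαB
    have hαR : α ∈ R := hRFθR α hαθ
    have e := claim1 α hαθ
    have : (nC α : ℝ) - ((nD α + m α : ℤ) : ℝ) = -(α lam - 1) := by
      rw [hm α hαR, e]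
      push_cast
      ring
    rw [this, abs_neg]
  rw [hsumA, hsumB]
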